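/- In the monotone case with Doob decomposition X_n = X_1 + M_n + A_n (M a zero-mean martingale, A_n = sum of Y_k with (Y_k) non-increasing), for every L ∈ ℕ and every stopping time τ with τ ≤ L a.s., E[X_τ] ≤ E[X_{min(τ*,L)}], where τ* = inf{n : Y_n ≤ 0} is the myopic stopping time. In particular min(τ*,L) is optimal among stopping times bounded by L. -/

import Mathlib

open MeasureTheory Filter

/-- Specification of the truncated myopic time built from an `ℕ∞` infimum. -/
lemma myT_spec (p : ℕ → Prop) (L : ℕ) :
    ((⨅ k : {k : ℕ // p k}, ((k : ℕ) : ℕ∞)) ⊓ (L : ℕ∞)).toNat ≤ L ∧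
    (∀ k < ((⨅ k : {k : ℕ // p k}, ((k : ℕ) : ℕ∞)) ⊓ (L : ℕ∞)).toNat, ¬ p k) ∧
    (((⨅ k : {k : ℕ // p k}, ((k : ℕ) : ℕ∞)) ⊓ (L : ℕ∞)).toNat < L →
      p (((⨅ k : {k : ℕ // p k}, ((k : ℕ) : ℕ∞)) ⊓ (L : ℕ∞)).toNat)) := by
  classical
  set I : ℕ∞ := ⨅ k : {k : ℕ // p k}, ((k : ℕ) : ℕ∞) with hI
  set t : ℕ := (I ⊓ (L : ℕ∞)).toNat with ht
  have htop : (L : ℕ∞) ≠ ⊤ := ENat.coe_ne_top L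
  have h1 : t ≤ L := by
    have : I ⊓ (L : ℕ∞) ≤ (L : ℕ∞) := inf_le_right
    simpa [ht] using ENat.toNat_le_toNat this htop
  refine ⟨h1, ?_, ?_⟩
  · intro k hk hpk
    have hIle : I ≤ (k : ℕ∞) := iInf_le (fun k : {k : ℕ // p k} => ((k : ℕ) : ℕ∞)) ⟨k, hpk⟩
    have hkL : (k : ℕ∞) ≤ (L : ℕ∞) := by
      exact_mod_cast (hk.trans_le h1).le
    have : I ⊓ (L : ℕ∞) ≤ (k : ℕ∞) := le_trans inf_le_left hIle
    have := ENat.toNat_le_toNat this (ENat.coe_ne_top k)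
    simp only [ENat.toNat_coe] at this
    omega
  · intro htL
    by_cases hex : ∃ k, p k
    · have hk0 := Nat.find_spec hex
      set k₀ := Nat.find hex with hk₀
      have hIeq : I = (k₀ : ℕ∞) := by
        refine le_antisymm (iInf_le (fun k : {k : ℕ // p k} => ((k : ℕ) : ℕ∞)) ⟨k₀, hk0⟩) ?_
        refine le_iInf fun j => ?_
        exact_mod_cast Nat.find_min' hex j.2
      have htmin : t = min k₀ L := by
        rw [ht, hIeq]
        rcases le_total k₀ L with h | h
        · rw [inf_eq_left.mpr (by exact_mod_cast h), ENat.toNat_coe, min_eq_left h]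
        · rw [inf_eq_right.mpr (by exact_mod_cast h), ENat.toNat_coe, min_eq_right h]
      have : t = k₀ := by omega
      rw [this]; exact hk0
    · exfalso
      have : IsEmpty {k : ℕ // p k} := ⟨fun k => hex ⟨k, k.2⟩⟩
      have hIeq : I = ⊤ := by rw [hI, iInf_of_empty]
      rw [ht, hIeq, top_inf_eq, ENat.toNat_coe] at htL
      omega

/-- Uniqueness of a time satisfying the myopic specification. -/
lemma stop_unique {L t1 t2 : ℕ} {p : ℕ → Prop}
    (h1 : t1 ≤ L) (h2 : ∀ k < t1, ¬ p k) (h3 : t1 < L → p t1)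
    (h1' : t2 ≤ L) (h2' : ∀ k < t2, ¬ p k) (h3' : t2 < L → p t2) : t1 = t2 := by
  rcases lt_trichotomy t1 t2 with h | h | h
  · exact absurd (h3 (h.trans_le h1')) (h2' t1 h)
  · exact h
  · exact absurd (h3' (h.trans_le h1)) (h2 t2 h)

/-- Pointwise optimality of the myopic time for sums of a non-increasing sequence. -/
lemma sum_le_myopic (Y : ℕ → ℝ) (hmono : ∀ k, Y (k + 1) ≤ Y k) (L n t : ℕ)
    (hn : n ≤ L) (ht : t ≤ L) (h2 : ∀ k < t, 0 < Y k) (h3 : t < L → Y t ≤ 0) :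
    ∑ k ∈ Finset.range n, Y k ≤ ∑ k ∈ Finset.range t, Y k := by
  have hanti : Antitone Y := antitone_nat_of_succ_le hmono
  rcases le_or_gt n t with h | h
  · rw [← Finset.sum_range_add_sum_Ico Y h]
    have : (0:ℝ) ≤ ∑ k ∈ Finset.Ico n t, Y k := by
      apply Finset.sum_nonneg
      intro k hk
      exact (h2 k (Finset.mem_Ico.mp hk).2).le
    linarith
  · rw [← Finset.sum_range_add_sum_Ico Y h.le]
    have htL : t < L := h.trans_le hn
    have : ∑ k ∈ Finset.Ico t n, Y k ≤ 0 := by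
      apply Finset.sum_nonpos
      intro k hk
      exact le_trans (hanti (Finset.mem_Ico.mp hk).1) (h3 htL)
    linarith

/-- In the monotone case with Doob decomposition `X n = X 0 + M n + A n`
(`M` a zero-mean martingale, `A n = ∑_{k<n} Y k` with `(Y k)` a.s. non-increasing), for
every `L` and every stopping time `τ ≤ L`, `E[X_τ] ≤ E[X_{min(τ*,L)}]`, where
`τ* = inf {n | Y n ≤ 0}` is the myopic stopping time. -/
theorem stmt1 {Ω : Type*} {m0 : MeasurableSpace Ω} (μ : Measure Ω) [IsProbabilityMeasure μ]
    (𝒜 : Filtration ℕ m0) (X Y M A : ℕ → Ω → ℝ)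
    (hadapt : Adapted 𝒜 X) (hint : ∀ n, Integrable (X n) μ)
    (hY : ∀ k, Y k =ᵐ[μ] fun ω => (μ[X (k + 1) | 𝒜 k]) ω - X k ω)
    (hA : ∀ n ω, A n ω = ∑ k ∈ Finset.range n, Y k ω)
    (hM : Martingale M 𝒜 μ) (hM0 : ∀ n, ∫ ω, M n ω ∂μ = 0)
    (hdecomp : ∀ n, ∀ᵐ ω ∂μ, X n ω = X 0 ω + M n ω + A n ω)
    (hmono : ∀ᵐ ω ∂μ, ∀ k, Y (k + 1) ω ≤ Y k ω)
    (τ : Ω → ℕ) (hτ : IsStoppingTime 𝒜 (fun ω => (τ ω : WithTop ℕ))) (L : ℕ) (hτL : ∀ ω, τ ω ≤ L) :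
    ∫ ω, X (τ ω) ω ∂μ ≤
      ∫ ω, X (((⨅ k : {k : ℕ // Y k ω ≤ 0}, ((k : ℕ) : ℕ∞)) ⊓ (L : ℕ∞)).toNat) ω ∂μ := by
  classical
  set Z : ℕ → Ω → ℝ := fun k ω => (μ[X (k + 1) | 𝒜 k]) ω - X k ω with hZdef
  set T : Ω → ℕ :=
    fun ω => ((⨅ k : {k : ℕ // Y k ω ≤ 0}, ((k : ℕ) : ℕ∞)) ⊓ (L : ℕ∞)).toNat with hTdef
  set σ : Ω → ℕ := hittingBtwn Z (Set.Iic (0:ℝ)) 0 L with hσdef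
  set B : ℕ → Ω → ℝ := fun n ω => X n ω - X 0 ω - M n ω with hBdef
  -- σ is a stopping time bounded by L
  have hZadapt : Adapted 𝒜 Z := fun k =>
    (stronglyMeasurable_condExp.sub (hadapt k).stronglyMeasurable).measurable
  have hσst : IsStoppingTime 𝒜 (fun ω => (σ ω : WithTop ℕ)) := hZadapt.isStoppingTime_hittingBtwn measurableSet_Iic
  have hσL : ∀ ω, σ ω ≤ L := fun ω => hittingBtwn_le ω
  -- specification of σ
  have hσspec : ∀ ω, (∀ k < σ ω, ¬ Z k ω ≤ 0) ∧ (σ ω < L → Z (σ ω) ω ≤ 0) := by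
    intro ω
    constructor
    · intro k hk hkle
      exact notMem_of_lt_hittingBtwn hk (Nat.zero_le k) (Set.mem_Iic.mpr hkle)
    · intro hlt
      exact Set.mem_Iic.mp (hittingBtwn_mem_set_of_hittingBtwn_lt hlt)
  -- a.e. facts
  have hYZ : ∀ᵐ ω ∂μ, ∀ k, Y k ω = Z k ω := ae_all_iff.mpr hY
  have hdec : ∀ᵐ ω ∂μ, ∀ n, X n ω = X 0 ω + M n ω + A n ω := ae_all_iff.mpr hdecomp
  -- a.e., T = σ
  have hTσ : ∀ᵐ ω ∂μ, T ω = σ ω := by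
    filter_upwards [hYZ] with ω hω
    obtain ⟨h1, h2, h3⟩ := myT_spec (fun k => Y k ω ≤ 0) L
    refine stop_unique (p := fun k => Z k ω ≤ 0) h1 ?_ ?_ (hσL ω)
      (hσspec ω).1 (hσspec ω).2
    · intro k hk
      show ¬ Z k ω ≤ 0
      rw [← hω k]; exact h2 k hk
    · intro h
      show Z _ ω ≤ 0
      rw [← hω _]; exact h3 h
  -- a.e., B n = ∑ Y k
  have hBsum : ∀ᵐ ω ∂μ, ∀ n, B n ω = ∑ k ∈ Finset.range n, Y k ω := by
    filter_upwards [hdec] with ω h n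
    have := h n
    rw [hA] at this
    simp only [hBdef]
    linarith
  -- key pointwise inequality
  have key : ∀ᵐ ω ∂μ, B (τ ω) ω ≤ B (σ ω) ω := by
    filter_upwards [hBsum, hmono, hTσ, hYZ] with ω hB hm hTs hω
    rw [hB, hB, ← hTs]
    obtain ⟨h1, h2, h3⟩ := myT_spec (fun k => Y k ω ≤ 0) L
    exact sum_le_myopic (fun k => Y k ω) hm L (τ ω) (T ω) (hτL ω) h1
      (fun k hk => lt_of_not_ge (h2 k hk)) h3
  -- integrability
  have hBint : ∀ n, Integrable (B n) μ := fun n =>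
    ((hint n).sub (hint 0)).sub (hM.integrable n)
  have hXτ : Integrable (stoppedValue X (fun ω => (τ ω : WithTop ℕ))) μ := integrable_stoppedValue ℕ hτ hint (N := L) (fun ω => WithTop.coe_le_coe.mpr (hτL ω))
  have hXσ : Integrable (stoppedValue X (fun ω => (σ ω : WithTop ℕ))) μ := integrable_stoppedValue ℕ hσst hint (N := L) (fun ω => WithTop.coe_le_coe.mpr (hσL ω))
  have hMτ : Integrable (stoppedValue M (fun ω => (τ ω : WithTop ℕ))) μ :=
    integrable_stoppedValue ℕ hτ hM.integrable (N := L) (fun ω => WithTop.coe_le_coe.mpr (hτL ω))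
  have hMσ : Integrable (stoppedValue M (fun ω => (σ ω : WithTop ℕ))) μ :=
    integrable_stoppedValue ℕ hσst hM.integrable (N := L) (fun ω => WithTop.coe_le_coe.mpr (hσL ω))
  have hBτ : Integrable (stoppedValue B (fun ω => (τ ω : WithTop ℕ))) μ := integrable_stoppedValue ℕ hτ hBint (N := L) (fun ω => WithTop.coe_le_coe.mpr (hτL ω))
  have hBσ : Integrable (stoppedValue B (fun ω => (σ ω : WithTop ℕ))) μ := integrable_stoppedValue ℕ hσst hBint (N := L) (fun ω => WithTop.coe_le_coe.mpr (hσL ω))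
  -- optional stopping: E[M_ρ] = 0 for bounded stopping times ρ
  have hEM : ∀ (ρ : Ω → ℕ), IsStoppingTime 𝒜 (fun ω => (ρ ω : WithTop ℕ)) → (∀ ω, ρ ω ≤ L) →
      ∫ ω, stoppedValue M (fun ω => (ρ ω : WithTop ℕ)) ω ∂μ = 0 := by
    intro ρ hρ hρL
    have hzero : IsStoppingTime 𝒜 (fun _ : Ω => WithTop.some (0:ℕ)) := isStoppingTime_const 𝒜 0
    have hle : (fun _ : Ω => WithTop.some (0:ℕ)) ≤ (fun ω => (ρ ω : WithTop ℕ)) :=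
      fun ω => WithTop.coe_le_coe.mpr (Nat.zero_le _)
    have h1 := hM.submartingale.expected_stoppedValue_mono hzero hρ hle (N := L) (fun ω => WithTop.coe_le_coe.mpr (hρL ω))
    have h2 := (hM.neg).submartingale.expected_stoppedValue_mono hzero hρ hle (N := L) (fun ω => WithTop.coe_le_coe.mpr (hρL ω))
    rw [stoppedValue_const] at h1 h2
    have hnegSV : stoppedValue (-M) (fun ω => (ρ ω : WithTop ℕ)) = fun ω => - stoppedValue M (fun ω => (ρ ω : WithTop ℕ)) ω := by
      funext ω; simp [stoppedValue]
    have hnegC : (-M) 0 = fun ω => - M 0 ω := by funext ω; simp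
    rw [hnegSV, hnegC, integral_neg, integral_neg] at h2
    have hM00 : ∫ ω, M 0 ω ∂μ = 0 := hM0 0
    have h2' : ∫ ω, stoppedValue M (fun ω => (ρ ω : WithTop ℕ)) ω ∂μ ≤ ∫ ω, M 0 ω ∂μ := by linarith
    have h1' : ∫ ω, M 0 ω ∂μ ≤ ∫ ω, stoppedValue M (fun ω => (ρ ω : WithTop ℕ)) ω ∂μ := h1
    linarith
  -- decomposition of the stopped value (exact, by definition of B)
  have hXsv : ∀ ρ : Ω → ℕ, stoppedValue X (fun ω => (ρ ω : WithTop ℕ)) =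
      fun ω => X 0 ω + (stoppedValue M (fun ω => (ρ ω : WithTop ℕ)) ω + stoppedValue B (fun ω => (ρ ω : WithTop ℕ)) ω) := by
    intro ρ; funext ω; simp only [stoppedValue, hBdef]; ring
  have hint0 : Integrable (X 0) μ := hint 0
  have hIτ : ∫ ω, stoppedValue X (fun ω => (τ ω : WithTop ℕ)) ω ∂μ =
      ∫ ω, X 0 ω ∂μ + (∫ ω, stoppedValue M (fun ω => (τ ω : WithTop ℕ)) ω ∂μ + ∫ ω, stoppedValue B (fun ω => (τ ω : WithTop ℕ)) ω ∂μ) := by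
    have h0 : ∫ ω, stoppedValue X (fun ω => (τ ω : WithTop ℕ)) ω ∂μ =
        ∫ ω, (X 0 ω + (stoppedValue M (fun ω => (τ ω : WithTop ℕ)) ω + stoppedValue B (fun ω => (τ ω : WithTop ℕ)) ω)) ∂μ :=
      integral_congr_ae (Eventually.of_forall fun ω => by rw [hXsv τ])
    have e1 : ∫ ω, (X 0 ω + (stoppedValue M (fun ω => (τ ω : WithTop ℕ)) ω + stoppedValue B (fun ω => (τ ω : WithTop ℕ)) ω)) ∂μ =
        ∫ ω, X 0 ω ∂μ + ∫ ω, (stoppedValue M (fun ω => (τ ω : WithTop ℕ)) ω + stoppedValue B (fun ω => (τ ω : WithTop ℕ)) ω) ∂μ :=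
      integral_add hint0 (hMτ.add hBτ)
    have e2 : ∫ ω, (stoppedValue M (fun ω => (τ ω : WithTop ℕ)) ω + stoppedValue B (fun ω => (τ ω : WithTop ℕ)) ω) ∂μ =
        ∫ ω, stoppedValue M (fun ω => (τ ω : WithTop ℕ)) ω ∂μ + ∫ ω, stoppedValue B (fun ω => (τ ω : WithTop ℕ)) ω ∂μ :=
      integral_add hMτ hBτ
    rw [h0, e1, e2]
  have hIσ : ∫ ω, stoppedValue X (fun ω => (σ ω : WithTop ℕ)) ω ∂μ =
      ∫ ω, X 0 ω ∂μ + (∫ ω, stoppedValue M (fun ω => (σ ω : WithTop ℕ)) ω ∂μ + ∫ ω, stoppedValue B (fun ω => (σ ω : WithTop ℕ)) ω ∂μ) := by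
    have h0 : ∫ ω, stoppedValue X (fun ω => (σ ω : WithTop ℕ)) ω ∂μ =
        ∫ ω, (X 0 ω + (stoppedValue M (fun ω => (σ ω : WithTop ℕ)) ω + stoppedValue B (fun ω => (σ ω : WithTop ℕ)) ω)) ∂μ :=
      integral_congr_ae (Eventually.of_forall fun ω => by rw [hXsv σ])
    have e1 : ∫ ω, (X 0 ω + (stoppedValue M (fun ω => (σ ω : WithTop ℕ)) ω + stoppedValue B (fun ω => (σ ω : WithTop ℕ)) ω)) ∂μ =
        ∫ ω, X 0 ω ∂μ + ∫ ω, (stoppedValue M (fun ω => (σ ω : WithTop ℕ)) ω + stoppedValue B (fun ω => (σ ω : WithTop ℕ)) ω) ∂μ :=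
      integral_add hint0 (hMσ.add hBσ)
    have e2 : ∫ ω, (stoppedValue M (fun ω => (σ ω : WithTop ℕ)) ω + stoppedValue B (fun ω => (σ ω : WithTop ℕ)) ω) ∂μ =
        ∫ ω, stoppedValue M (fun ω => (σ ω : WithTop ℕ)) ω ∂μ + ∫ ω, stoppedValue B (fun ω => (σ ω : WithTop ℕ)) ω ∂μ :=
      integral_add hMσ hBσ
    rw [h0, e1, e2]
  -- compare the B-parts
  have hBcomp : ∫ ω, stoppedValue B (fun ω => (τ ω : WithTop ℕ)) ω ∂μ ≤ ∫ ω, stoppedValue B (fun ω => (σ ω : WithTop ℕ)) ω ∂μ :=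
    integral_mono_ae hBτ hBσ key
  -- identify RHS with ∫ stoppedValue X (fun ω => (σ ω : WithTop ℕ))
  have hRHS : ∫ ω, X (T ω) ω ∂μ = ∫ ω, stoppedValue X (fun ω => (σ ω : WithTop ℕ)) ω ∂μ := by
    apply integral_congr_ae
    filter_upwards [hTσ] with ω h
    rw [stoppedValue, h]; rfl
  calc ∫ ω, X (τ ω) ω ∂μ
      = ∫ ω, stoppedValue X (fun ω => (τ ω : WithTop ℕ)) ω ∂μ := rfl
    _ = ∫ ω, X 0 ω ∂μ + (∫ ω, stoppedValue M (fun ω => (τ ω : WithTop ℕ)) ω ∂μ + ∫ ω, stoppedValue B (fun ω => (τ ω : WithTop ℕ)) ω ∂μ) := hIτ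
    _ ≤ ∫ ω, X 0 ω ∂μ + (∫ ω, stoppedValue M (fun ω => (σ ω : WithTop ℕ)) ω ∂μ + ∫ ω, stoppedValue B (fun ω => (σ ω : WithTop ℕ)) ω ∂μ) := by
        rw [hEM τ hτ hτL, hEM σ hσst hσL]; linarith
    _ = ∫ ω, stoppedValue X (fun ω => (σ ω : WithTop ℕ)) ω ∂μ := hIσ.symm
    _ = ∫ ω, X (T ω) ω ∂μ := hRHS.symm
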